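/- (Monotonicity of MMOO effective bandwidth) The function α(θ) = (1/(2θ))(Pθ - r_10 - r_01 + √((Pθ - r_10 + r_01)² + 4 r_10 r_01)) is nondecreasing in θ > 0. -/

import Mathlib

/-- Auxiliary: for `θ > 0`, the value `a = (1/(2θ))(Pθ - r10 - r01 + √(...))`
satisfies `0 < a < P` and the quadratic equation `θa² - (Pθ - r10 - r01)a - P r01 = 0`. -/
lemma mmoo_aux (P r10 r01 θ : ℝ) (hP : 0 < P) (h10 : 0 < r10) (h01 : 0 < r01)
    (hθ : 0 < θ) :
    0 < (1 / (2 * θ)) * (P * θ - r10 - r01 +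
        Real.sqrt ((P * θ - r10 + r01) ^ 2 + 4 * r10 * r01)) ∧
    (1 / (2 * θ)) * (P * θ - r10 - r01 +
        Real.sqrt ((P * θ - r10 + r01) ^ 2 + 4 * r10 * r01)) < P ∧
    θ * ((1 / (2 * θ)) * (P * θ - r10 - r01 +
        Real.sqrt ((P * θ - r10 + r01) ^ 2 + 4 * r10 * r01))) ^ 2
      - (P * θ - r10 - r01) * ((1 / (2 * θ)) * (P * θ - r10 - r01 +
        Real.sqrt ((P * θ - r10 + r01) ^ 2 + 4 * r10 * r01))) - P * r01 = 0 := by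
  set q : ℝ := (P * θ - r10 + r01) ^ 2 + 4 * r10 * r01 with hqdef
  have hq0 : 0 ≤ q := by positivity
  set s : ℝ := Real.sqrt q with hsdef
  have hs0 : 0 ≤ s := Real.sqrt_nonneg _
  have hs2 : s ^ 2 = q := Real.sq_sqrt hq0
  set a : ℝ := (1 / (2 * θ)) * (P * θ - r10 - r01 + s) with hadef
  have hθ' : (2 * θ) ≠ 0 := by positivity
  have h3 : 2 * θ * a = P * θ - r10 - r01 + s := by
    rw [hadef]; field_simp
  -- s² > (Pθ - r10 - r01)²  (since q - (Pθ - b)² = 4 r01 P θ > 0)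
  have h1 : (P * θ - r10 - r01) ^ 2 < s ^ 2 := by
    rw [hs2, hqdef]
    nlinarith [mul_pos (mul_pos h01 hP) hθ]
  -- hence Pθ - r10 - r01 + s > 0
  have hpos : 0 < P * θ - r10 - r01 + s := by nlinarith
  -- s < Pθ + r10 + r01  (since (Pθ+b)² - q = 4 r10 P θ > 0)
  have h2 : s < P * θ + r10 + r01 := by
    have hb : 0 < P * θ + r10 + r01 := by positivity
    nlinarith [mul_pos (mul_pos h10 hP) hθ, hs2]
  have ha0 : 0 < a := by
    rw [hadef]; positivity
  have haP : a < P := by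
    have : 2 * θ * a < 2 * θ * P := by rw [h3]; nlinarith
    have h2θ : 0 < 2 * θ := by positivity
    nlinarith
  refine ⟨ha0, haP, ?_⟩
  have h4 : 4 * θ * (θ * a ^ 2 - (P * θ - r10 - r01) * a - P * r01) = 0 := by
    have hss : s ^ 2 = q := hs2
    rw [hqdef] at hss
    linear_combination (2 * θ * a - P * θ + r10 + r01 + s) * h3 + hss
  have h4θ : (4 * θ) ≠ 0 := by positivity
  have := mul_eq_zero.mp h4
  rcases this with h | h
  · exact absurd h h4θ
  · exact h

/-- Monotonicity of the MMOO effective bandwidth: the function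
`α(θ) = (1/(2θ))(Pθ - r10 - r01 + √((Pθ - r10 + r01)² + 4 r10 r01))`
is nondecreasing on `(0, ∞)`. -/
theorem mmoo_effective_bandwidth_monotone (P r10 r01 : ℝ)
    (hP : 0 < P) (h10 : 0 < r10) (h01 : 0 < r01) :
    MonotoneOn (fun θ : ℝ =>
      (1 / (2 * θ)) * (P * θ - r10 - r01 +
        Real.sqrt ((P * θ - r10 + r01) ^ 2 + 4 * r10 * r01)))
      (Set.Ioi (0 : ℝ)) := by
  intro x hx y hy hxy
  simp only [Set.mem_Ioi] at hx hy
  obtain ⟨hA0, hAP, hAeq⟩ := mmoo_aux P r10 r01 x hP h10 h01 hx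
  obtain ⟨hB0, hBP, hBeq⟩ := mmoo_aux P r10 r01 y hP h10 h01 hy
  set A : ℝ := (1 / (2 * x)) * (P * x - r10 - r01 +
      Real.sqrt ((P * x - r10 + r01) ^ 2 + 4 * r10 * r01)) with hAdef
  set B : ℝ := (1 / (2 * y)) * (P * y - r10 - r01 +
      Real.sqrt ((P * y - r10 + r01) ^ 2 + 4 * r10 * r01)) with hBdef
  show A ≤ B
  -- the defining quadratic equations, rewritten
  have e1 : x * A * (P - A) = (r10 + r01) * A - P * r01 := by linear_combination -hAeq
  have e2 : y * B * (P - B) = (r10 + r01) * B - P * r01 := by linear_combination -hBeq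
  by_contra hc
  push_neg at hc
  -- key algebraic identity
  have ident : (x - y) * (A * (P - A)) * (B * (P - B))
      = (A - B) * (r10 * A * B + r01 * ((P - A) * (P - B))) := by
    linear_combination (B * (P - B)) * e1 - (A * (P - A)) * e2
  have hPA : 0 < P - A := by linarith
  have hPB : 0 < P - B := by linarith
  have hPi : 0 < (A * (P - A)) * (B * (P - B)) :=
    mul_pos (mul_pos hA0 hPA) (mul_pos hB0 hPB)
  have hR : 0 < (A - B) * (r10 * A * B + r01 * ((P - A) * (P - B))) :=
    mul_pos (by linarith)
      (add_pos (mul_pos (mul_pos h10 hA0) hB0) (mul_pos h01 (mul_pos hPA hPB)))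
  have hxy0 : 0 ≤ (y - x) * ((A * (P - A)) * (B * (P - B))) := mul_nonneg (sub_nonneg.mpr hxy) hPi.le
  linarith
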